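/- Let A be a real m×n matrix of rank n with rows a₁ᵀ, …, a_mᵀ, and let f = A·x_f ∈ R_ℂ(A) with x_f ∈ ℂⁿ. Then f is complex conjugate phase retrieval in R_ℂ(A) if and only if there do not exist x₁, x₂ ∈ ℂⁿ such that x_f = x₁ + x₂ and the real n×n matrix X = Re(x₂)·(Re x₁)ᵀ + Im(x₂)·(Im x₁)ᵀ satisfies Xᵀ ≠ −X and Tr(a_i a_iᵀ X) = a_iᵀ X a_i = 0 for all 1 ≤ i ≤ m. -/

import Mathlib

open Complex Matrix

/-! ### Auxiliary lemmas -/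

lemma quad_eq {m n : ℕ} (A : Matrix (Fin m) (Fin n) ℝ) (x₁ x₂ : Fin n → ℂ) (i : Fin m) :
    A i ⬝ᵥ (Matrix.of (fun j k => (x₂ j).re * (x₁ k).re + (x₂ j).im * (x₁ k).im)).mulVec (A i)
      = (A.mulVec (fun j => (x₂ j).re) i) * (A.mulVec (fun j => (x₁ j).re) i)
        + (A.mulVec (fun j => (x₂ j).im) i) * (A.mulVec (fun j => (x₁ j).im) i) := by
  simp only [Matrix.mulVec, dotProduct, Matrix.of_apply, Finset.sum_mul_sum,
    Finset.mul_sum]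
  conv_lhs => rw [Finset.sum_comm]
  rw [← Finset.sum_add_distrib]
  refine Finset.sum_congr rfl fun k _ => ?_
  rw [Finset.sum_mul, Finset.sum_mul, ← Finset.sum_add_distrib]
  refine Finset.sum_congr rfl fun j _ => ?_
  ring

lemma mulVec_map_re {m n : ℕ} (A : Matrix (Fin m) (Fin n) ℝ) (x : Fin n → ℂ) (i : Fin m) :
    ((A.map Complex.ofReal).mulVec x i).re = A.mulVec (fun j => (x j).re) i := by
  simp [Matrix.mulVec, dotProduct, Complex.re_sum]

lemma mulVec_map_im {m n : ℕ} (A : Matrix (Fin m) (Fin n) ℝ) (x : Fin n → ℂ) (i : Fin m) :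
    ((A.map Complex.ofReal).mulVec x i).im = A.mulVec (fun j => (x j).im) i := by
  simp [Matrix.mulVec, dotProduct, Complex.im_sum]

lemma abs_add_eq_abs_sub_iff (c1 c2 : ℂ) :
    ‖c1 + c2‖ = ‖c1 - c2‖ ↔ c2.re * c1.re + c2.im * c1.im = 0 := by
  constructor
  · intro h
    have h2 := congrArg (· ^ 2) h
    simp only [Complex.sq_norm, Complex.normSq_apply, Complex.add_re, Complex.add_im,
      Complex.sub_re, Complex.sub_im] at h2
    nlinarith [h2]
  · intro h
    rw [Complex.norm_def, Complex.norm_def]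
    congr 1
    simp only [Complex.normSq_apply, Complex.add_re, Complex.add_im, Complex.sub_re,
      Complex.sub_im]
    nlinarith [h]

lemma meas_iff {m n : ℕ} (A : Matrix (Fin m) (Fin n) ℝ) (x₁ x₂ : Fin n → ℂ) (i : Fin m) :
    ‖(A.map Complex.ofReal).mulVec (x₁ + x₂) i‖
      = ‖(A.map Complex.ofReal).mulVec (x₁ - x₂) i‖
    ↔ A i ⬝ᵥ (Matrix.of (fun j k =>
        (x₂ j).re * (x₁ k).re + (x₂ j).im * (x₁ k).im)).mulVec (A i) = 0 := by
  rw [Matrix.mulVec_add, Matrix.mulVec_sub, Pi.add_apply, Pi.sub_apply,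
    abs_add_eq_abs_sub_iff, quad_eq, ← mulVec_map_re, ← mulVec_map_re,
    ← mulVec_map_im, ← mulVec_map_im]

lemma inj_real {m n : ℕ} (A : Matrix (Fin m) (Fin n) ℝ) (hA : A.rank = n) :
    Function.Injective A.mulVec := by
  have h1 : LinearMap.ker A.mulVecLin = ⊥ := by
    have h2 := A.mulVecLin.finrank_range_add_finrank_ker
    rw [show Module.finrank ℝ (LinearMap.range A.mulVecLin) = A.rank from rfl, hA] at h2
    simp only [Module.finrank_pi, Fintype.card_fin] at h2
    have h3 : Module.finrank ℝ (LinearMap.ker A.mulVecLin) = 0 := by omega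
    exact Submodule.finrank_eq_zero.mp h3
  have := LinearMap.ker_eq_bot.mp h1
  exact this

lemma inj_complex {m n : ℕ} (A : Matrix (Fin m) (Fin n) ℝ) (hA : A.rank = n) :
    Function.Injective (A.map Complex.ofReal).mulVec := by
  intro y y' hyy
  funext j
  have hre : A.mulVec (fun j => (y j).re) = A.mulVec (fun j => (y' j).re) := by
    funext i
    rw [← mulVec_map_re, ← mulVec_map_re, hyy]
  have him : A.mulVec (fun j => (y j).im) = A.mulVec (fun j => (y' j).im) := by
    funext i
    rw [← mulVec_map_im, ← mulVec_map_im, hyy]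
  exact Complex.ext (congrFun (inj_real A hA hre) j) (congrFun (inj_real A hA him) j)

lemma bridge_scalar (a b a' b' : ℂ) :
    ((a + b) * (starRingEnd ℂ) (a' + b')).re - ((a - b) * (starRingEnd ℂ) (a' - b')).re
      = 2 * ((b.re * a'.re + b.im * a'.im) + (b'.re * a.re + b'.im * a.im)) := by
  simp only [Complex.mul_re, Complex.add_re, Complex.add_im, Complex.sub_re, Complex.sub_im,
    Complex.conj_re, Complex.conj_im]
  ring

lemma keyB {n : ℕ} (x x' : Fin n → ℂ)
    (h : ∀ j k, (x j * (starRingEnd ℂ) (x k)).re = (x' j * (starRingEnd ℂ) (x' k)).re) :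
    ∃ z : ℂ, ‖z‖ = 1 ∧ (x' = z • x ∨ x' = z • (star x)) := by
  have habs : ∀ j, ‖x' j‖ = ‖x j‖ := by
    intro j
    have h1 := h j j
    rw [Complex.mul_conj, Complex.mul_conj] at h1
    have h2 : Complex.normSq (x j) = Complex.normSq (x' j) := by simpa using h1
    rw [Complex.norm_def, Complex.norm_def, h2]
  by_cases hx : ∀ j, x j = 0
  · refine ⟨1, by simp, Or.inl ?_⟩
    funext j
    have h0 : ‖x' j‖ = 0 := by rw [habs j, hx j, norm_zero]
    simp [norm_eq_zero.mp h0, hx j]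
  · push_neg at hx
    obtain ⟨j₀, hj₀⟩ := hx
    set r : ℝ := ‖x j₀‖ with hr
    have hrpos : 0 < r := norm_pos_iff.mpr hj₀
    have hrne : (r : ℂ) ≠ 0 := Complex.ofReal_ne_zero.mpr hrpos.ne'
    set u : ℂ := x j₀ / r with hu
    set u' : ℂ := x' j₀ / r with hu'
    have huabs : ‖u‖ = 1 := by
      rw [hu, norm_div, Complex.norm_real, Real.norm_of_nonneg hrpos.le, ← hr, div_self hrpos.ne']
    have hu'abs : ‖u'‖ = 1 := by
      rw [hu', norm_div, Complex.norm_real, Real.norm_of_nonneg hrpos.le, habs j₀, ← hr, div_self hrpos.ne']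
    have huu : u * (starRingEnd ℂ) u = 1 := by
      rw [Complex.mul_conj, Complex.normSq_eq_norm_sq, huabs]; norm_num
    have hu'u' : u' * (starRingEnd ℂ) u' = 1 := by
      rw [Complex.mul_conj, Complex.normSq_eq_norm_sq, hu'abs]; norm_num
    set y : Fin n → ℂ := fun k => (starRingEnd ℂ) u * x k with hy
    set y' : Fin n → ℂ := fun k => (starRingEnd ℂ) u' * x' k with hy'
    have hxy' : ∀ k, x' k = u' * y' k := by
      intro k; rw [hy']; dsimp only
      rw [← mul_assoc, hu'u', one_mul]
    have hyj₀ : y j₀ = (r : ℂ) := by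
      rw [hy]; dsimp only
      rw [hu, map_div₀, Complex.conj_ofReal, div_mul_eq_mul_div, mul_comm (starRingEnd ℂ (x j₀)),
        Complex.mul_conj, Complex.normSq_eq_norm_sq, ← hr, div_eq_iff hrne]
      push_cast; ring
    have hy'j₀ : y' j₀ = (r : ℂ) := by
      rw [hy']; dsimp only
      rw [hu', map_div₀, Complex.conj_ofReal, div_mul_eq_mul_div, mul_comm (starRingEnd ℂ (x' j₀)),
        Complex.mul_conj, Complex.normSq_eq_norm_sq, habs j₀, ← hr, div_eq_iff hrne]
      push_cast; ring
    have e1 : ∀ j k, y j * (starRingEnd ℂ) (y k) = x j * (starRingEnd ℂ) (x k) := by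
      intro j k
      calc y j * (starRingEnd ℂ) (y k)
          = (u * (starRingEnd ℂ) u) * (x j * (starRingEnd ℂ) (x k)) := by
            rw [hy]; dsimp only; rw [_root_.map_mul, Complex.conj_conj]; ring
        _ = x j * (starRingEnd ℂ) (x k) := by rw [huu, one_mul]
    have e2 : ∀ j k, y' j * (starRingEnd ℂ) (y' k) = x' j * (starRingEnd ℂ) (x' k) := by
      intro j k
      calc y' j * (starRingEnd ℂ) (y' k)
          = (u' * (starRingEnd ℂ) u') * (x' j * (starRingEnd ℂ) (x' k)) := by
            rw [hy']; dsimp only; rw [_root_.map_mul, Complex.conj_conj]; ring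
        _ = x' j * (starRingEnd ℂ) (x' k) := by rw [hu'u', one_mul]
    have hP : ∀ j k, (y j * (starRingEnd ℂ) (y k)).re = (y' j * (starRingEnd ℂ) (y' k)).re := by
      intro j k; rw [e1, e2]; exact h j k
    have hre : ∀ k, (y' k).re = (y k).re := by
      intro k
      have h1 := hP j₀ k
      rw [hyj₀, hy'j₀] at h1
      have h2 : r * ((starRingEnd ℂ) (y k)).re = r * ((starRingEnd ℂ) (y' k)).re := by
        simpa [Complex.mul_re, Complex.ofReal_re, Complex.ofReal_im] using h1
      have h3 := mul_left_cancel₀ hrpos.ne' h2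
      simpa [Complex.conj_re] using h3.symm
    have him : ∀ k, (y' k).im = (y k).im ∨ (y' k).im = -((y k).im) := by
      intro k
      have h1 := hP k k
      rw [Complex.mul_conj, Complex.mul_conj] at h1
      have h2 : Complex.normSq (y k) = Complex.normSq (y' k) := by simpa using h1
      rw [Complex.normSq_apply, Complex.normSq_apply, hre k] at h2
      have h3 : (y k).im * (y k).im = (y' k).im * (y' k).im := by nlinarith [h2]
      rcases mul_self_eq_mul_self_iff.mp h3 with h4 | h4
      · exact Or.inl h4.symm
      · exact Or.inr (by linarith)
    by_cases hsame : ∀ k, y' k = y k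
    · refine ⟨u' * (starRingEnd ℂ) u, ?_, Or.inl ?_⟩
      · rw [norm_mul, hu'abs, Complex.norm_conj, huabs, one_mul]
      · funext k
        rw [hxy' k, hsame k, hy]
        dsimp only [Pi.smul_apply, smul_eq_mul]
        ring
    · push_neg at hsame
      obtain ⟨k₁, hk₁⟩ := hsame
      have hk₁im : (y' k₁).im = -((y k₁).im) ∧ (y k₁).im ≠ 0 := by
        rcases him k₁ with h4 | h4
        · exact absurd (Complex.ext (hre k₁) h4) hk₁
        · refine ⟨h4, fun h0 => ?_⟩
          exact hk₁ (Complex.ext (hre k₁) (by rw [h4, h0, neg_zero]))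
      have hconj : ∀ k, y' k = (starRingEnd ℂ) (y k) := by
        intro k
        refine Complex.ext (by rw [hre k, Complex.conj_re]) ?_
        rw [Complex.conj_im]
        rcases him k with h4 | h4
        · have h1 := hP k₁ k
          simp only [Complex.mul_re, Complex.conj_re, Complex.conj_im] at h1
          rw [hre k₁, hre k, hk₁im.1, h4] at h1
          have h5 : (y k).im = 0 := by
            rcases mul_eq_zero.mp (by linarith : (y k₁).im * (y k).im * 2 = 0) with h6 | h6
            · rcases mul_eq_zero.mp h6 with h7 | h7
              · exact absurd h7 hk₁im.2
              · exact h7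
            · norm_num at h6
          rw [h4, h5, neg_zero]
        · exact h4
      refine ⟨u' * u, ?_, Or.inr ?_⟩
      · rw [norm_mul, hu'abs, huabs, one_mul]
      · funext k
        rw [hxy' k, hconj k, hy]
        dsimp only [Pi.smul_apply, smul_eq_mul, Pi.star_apply]
        rw [_root_.map_mul, Complex.conj_conj, Complex.star_def]
        ring

/-- **Corollary 2.3 (complex conjugate phase retrieval in a complex range space).**
Let `A` be a real `m × n` matrix of rank `n` with rows `aᵢ`, and `f = A xf ∈ R_ℂ(A)`.
Then `f` is complex conjugate phase retrieval in `R_ℂ(A)` iff there do not exist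
`x₁, x₂ ∈ ℂⁿ` with `xf = x₁ + x₂` such that the real matrix
`X = Re x₂ (Re x₁)ᵀ + Im x₂ (Im x₁)ᵀ` satisfies `Xᵀ ≠ -X` and `aᵢᵀ X aᵢ = 0` for all `i`. -/
theorem stmt_2 {m n : ℕ} (A : Matrix (Fin m) (Fin n) ℝ) (hA : A.rank = n)
    (xf : Fin n → ℂ) :
    (∀ y : Fin n → ℂ,
        (∀ i, ‖(A.map (Complex.ofReal)).mulVec y i‖ =
          ‖(A.map (Complex.ofReal)).mulVec xf i‖) →
        ∃ z : ℂ, ‖z‖ = 1 ∧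
          ((A.map (Complex.ofReal)).mulVec y = z • (A.map (Complex.ofReal)).mulVec xf ∨
            (A.map (Complex.ofReal)).mulVec y = z • (A.map (Complex.ofReal)).mulVec (star xf))) ↔
      ¬ ∃ (x₁ x₂ : Fin n → ℂ) (X : Matrix (Fin n) (Fin n) ℝ),
          xf = x₁ + x₂ ∧
          X = Matrix.of (fun j k => (x₂ j).re * (x₁ k).re + (x₂ j).im * (x₁ k).im) ∧
          Xᵀ ≠ -X ∧
          (∀ i, A i ⬝ᵥ X.mulVec (A i) = 0) := by
  constructor
  · -- forward direction
    intro hCCPR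
    rintro ⟨x₁, x₂, X, hxf, hXdef, hXne, hXzero⟩
    apply hXne
    rw [hXdef] at hXzero
    have hmeas : ∀ i, ‖(A.map Complex.ofReal).mulVec (x₁ - x₂) i‖
        = ‖(A.map Complex.ofReal).mulVec xf i‖ := by
      intro i
      rw [hxf]
      exact ((meas_iff A x₁ x₂ i).mpr (hXzero i)).symm
    obtain ⟨z, hz, hcase⟩ := hCCPR (x₁ - x₂) hmeas
    have hzz : z * (starRingEnd ℂ) z = 1 := by
      rw [Complex.mul_conj, Complex.normSq_eq_norm_sq, hz]; norm_num
    have hy : x₁ - x₂ = z • xf ∨ x₁ - x₂ = z • (star xf) := by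
      rcases hcase with hc | hc
      · exact Or.inl (inj_complex A hA (by rw [Matrix.mulVec_smul]; exact hc))
      · exact Or.inr (inj_complex A hA (by rw [Matrix.mulVec_smul]; exact hc))
    have hP : ∀ j k, (xf j * (starRingEnd ℂ) (xf k)).re
        = ((x₁ - x₂) j * (starRingEnd ℂ) ((x₁ - x₂) k)).re := by
      rcases hy with hc | hc
      · intro j k
        rw [hc]
        have e : (z • xf) j * (starRingEnd ℂ) ((z • xf) k)
            = (z * (starRingEnd ℂ) z) * (xf j * (starRingEnd ℂ) (xf k)) := by
          simp only [Pi.smul_apply, smul_eq_mul, _root_.map_mul]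
          ring
        rw [e, hzz, one_mul]
      · intro j k
        rw [hc]
        have e : (z • star xf) j * (starRingEnd ℂ) ((z • star xf) k)
            = (z * (starRingEnd ℂ) z) * ((starRingEnd ℂ) (xf j) * xf k) := by
          simp only [Pi.smul_apply, smul_eq_mul, Pi.star_apply, Complex.star_def,
            _root_.map_mul, Complex.conj_conj]
          ring
        rw [e, hzz, one_mul]
        have e2 : (starRingEnd ℂ) (xf j) * xf k
            = (starRingEnd ℂ) (xf j * (starRingEnd ℂ) (xf k)) := by
          rw [_root_.map_mul, Complex.conj_conj]
        rw [e2, Complex.conj_re]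
    rw [hXdef]
    ext j k
    simp only [Matrix.transpose_apply, Matrix.neg_apply, Matrix.of_apply]
    have hb := bridge_scalar (x₁ j) (x₂ j) (x₁ k) (x₂ k)
    have h0 : ((x₁ j + x₂ j) * (starRingEnd ℂ) (x₁ k + x₂ k)).re
        = ((x₁ j - x₂ j) * (starRingEnd ℂ) (x₁ k - x₂ k)).re := by
      have h1 := hP j k
      rw [hxf] at h1
      simpa [Pi.add_apply, Pi.sub_apply] using h1
    linarith
  · -- backward direction
    intro hno y hmeas
    set x₁ : Fin n → ℂ := (2 : ℂ)⁻¹ • (xf + y) with hx₁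
    set x₂ : Fin n → ℂ := (2 : ℂ)⁻¹ • (xf - y) with hx₂
    have h1 : xf = x₁ + x₂ := by
      funext j
      rw [hx₁, hx₂]
      simp only [Pi.add_apply, Pi.smul_apply, Pi.sub_apply, smul_eq_mul]
      ring
    have h2 : y = x₁ - x₂ := by
      funext j
      rw [hx₁, hx₂]
      simp only [Pi.sub_apply, Pi.smul_apply, Pi.add_apply, smul_eq_mul]
      ring
    have hXa : ∀ i, A i ⬝ᵥ (Matrix.of (fun j k =>
        (x₂ j).re * (x₁ k).re + (x₂ j).im * (x₁ k).im)).mulVec (A i) = 0 := by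
      intro i
      refine (meas_iff A x₁ x₂ i).mp ?_
      rw [← h1, ← h2]
      exact (hmeas i).symm
    have hXsym : (Matrix.of (fun j k =>
          (x₂ j).re * (x₁ k).re + (x₂ j).im * (x₁ k).im))ᵀ
        = -(Matrix.of (fun j k =>
          (x₂ j).re * (x₁ k).re + (x₂ j).im * (x₁ k).im)) := by
      by_contra hc
      exact hno ⟨x₁, x₂, _, h1, rfl, hc, hXa⟩
    have hP : ∀ j k, (xf j * (starRingEnd ℂ) (xf k)).re
        = (y j * (starRingEnd ℂ) (y k)).re := by
      intro j k
      have hjk := congrFun (congrFun hXsym j) k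
      simp only [Matrix.transpose_apply, Matrix.neg_apply, Matrix.of_apply] at hjk
      have hb := bridge_scalar (x₁ j) (x₂ j) (x₁ k) (x₂ k)
      rw [h1, h2]
      simp only [Pi.add_apply, Pi.sub_apply]
      linarith
    obtain ⟨z, hz, hcase⟩ := keyB xf y hP
    refine ⟨z, hz, ?_⟩
    rcases hcase with hc | hc
    · exact Or.inl (by rw [hc, Matrix.mulVec_smul])
    · exact Or.inr (by rw [hc, Matrix.mulVec_smul])
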